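/- A graph G is paw-free if and only if every connected component of G is either triangle-free or complete multipartite. -/

import Mathlib

/-- The paw graph: a triangle `{0,1,2}` plus the vertex `3` adjacent to `0`. -/
def pawGraph : SimpleGraph (Fin 4) :=
  SimpleGraph.fromRel (fun a b =>
    (a = 0 ∧ b = 1) ∨ (a = 0 ∧ b = 2) ∨ (a = 1 ∧ b = 2) ∨ (a = 0 ∧ b = 3))

section Aux
variable {V : Type*} {G : SimpleGraph V}

/-- Paw-free as a concrete condition on quadruples. -/
def PawFree {V : Type*} (G : SimpleGraph V) : Prop :=
  ∀ a b c d : V, G.Adj a b → G.Adj a c → G.Adj b c → G.Adj a d →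
    ¬ G.Adj b d → ¬ G.Adj c d → False

/-- `x` lies in a triangle. -/
def InTri {V : Type*} (G : SimpleGraph V) (x : V) : Prop :=
  ∃ y z, G.Adj x y ∧ G.Adj x z ∧ G.Adj y z

lemma pawFree_of_isEmpty (h : IsEmpty (pawGraph ↪g G)) : PawFree G := by
  intro a b c d hab hac hbc had hbd hcd
  have hne : ∀ i j : Fin 4, i ≠ j → (![a,b,c,d] i ≠ ![a,b,c,d] j) := by
    have h1 : a ≠ b := hab.ne
    have h2 : a ≠ c := hac.ne
    have h3 : b ≠ c := hbc.ne
    have h4 : a ≠ d := had.ne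
    have h5 : b ≠ d := fun h => hcd (h ▸ hbc.symm)
    have h6 : c ≠ d := fun h => hbd (h ▸ hbc)
    intro i j hij
    fin_cases i <;> fin_cases j <;> simp_all <;> tauto
  have hdb : ¬ G.Adj d b := fun h => hbd h.symm
  have hdc : ¬ G.Adj d c := fun h => hcd h.symm
  refine h.false ⟨⟨![a,b,c,d], fun i j hij => by by_contra h; exact hne i j h hij⟩, ?_⟩
  intro i j
  change G.Adj (![a,b,c,d] i) (![a,b,c,d] j) ↔ pawGraph.Adj i j
  fin_cases i <;> fin_cases j <;>
    simp [pawGraph, hab, hac, hbc, had, hab.symm, hac.symm, hbc.symm, had.symm,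
      hbd, hcd, hdb, hdc, G.irrefl]

lemma adj_two_of_triangle (hpaw : PawFree G) {x y z w : V}
    (hxy : G.Adj x y) (hxz : G.Adj x z) (hyz : G.Adj y z) (hwx : G.Adj w x) :
    G.Adj w y ∨ G.Adj w z := by
  by_contra h
  push_neg at h
  exact hpaw x y z w hxy hxz hyz hwx.symm (fun h' => h.1 h'.symm) (fun h' => h.2 h'.symm)

lemma inTri_of_adj (hpaw : PawFree G) {x w : V} (hx : InTri G x) (hadj : G.Adj x w) :
    InTri G w := by
  obtain ⟨y, z, hxy, hxz, hyz⟩ := hx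
  rcases adj_two_of_triangle hpaw hxy hxz hyz hadj.symm with h | h
  · exact ⟨x, y, hadj.symm, h, hxy⟩
  · exact ⟨x, z, hadj.symm, h, hxz⟩

lemma inTri_of_reachable (hpaw : PawFree G) {x w : V} (hx : InTri G x)
    (h : G.Reachable x w) : InTri G w := by
  obtain ⟨p⟩ := h
  induction p with
  | nil => exact hx
  | cons hadj p ih => exact ih (inTri_of_adj hpaw hx hadj)

/-- Key case: `b–q–a` path, `q` in a triangle, edge `a–c`, with the nonadjacencies shown. -/
lemma case_F (hpaw : PawFree G) {a b c q : V} (hqT : InTri G q)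
    (hbq : G.Adj b q) (hqa : G.Adj q a) (hac : G.Adj a c) (hqc : ¬ G.Adj q c)
    (hba : ¬ G.Adj b a) (hbc : ¬ G.Adj b c) : False := by
  -- find t with q-a-t triangle
  obtain ⟨y, z, hqy, hqz, hyz⟩ := hqT
  have hat : ∃ t, G.Adj q t ∧ G.Adj a t := by
    rcases adj_two_of_triangle hpaw hqy hqz hyz hqa.symm with h | h
    · exact ⟨y, hqy, h⟩
    · exact ⟨z, hqz, h⟩
  obtain ⟨t, hqt, hat⟩ := hat
  -- b adjacent to two of {q, a, t}
  have hbt : G.Adj b t := by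
    rcases adj_two_of_triangle hpaw hqa hqt hat hbq with h | h
    · exact absurd h hba
    · exact h
  by_cases htc : G.Adj t c
  · -- paw on triangle t a c with pendant b
    exact hpaw t a c b hat.symm htc hac hbt.symm (fun h => hba h.symm) (fun h => hbc h.symm)
  · -- paw on triangle a q t with pendant c
    exact hpaw a q t c hqa.symm hat hqt hac hqc htc

lemma key_E (hpaw : PawFree G) {a c : V} (hac : G.Adj a c)
    (htri : ∀ w, G.Reachable w a → InTri G w) :
    ∀ n (b : V) (p : G.Walk b a), p.length ≤ n → ¬ G.Adj b a → ¬ G.Adj b c → False := by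
  intro n
  induction n with
  | zero =>
    intro b p hp hba hbc
    cases p with
    | nil => exact hbc hac
    | cons h q => simp at hp
  | succ n ih =>
    intro b p hp hba hbc
    cases p with
    | nil => exact hbc hac
    | cons hbq p' =>
      rename_i q
      have hqreach : G.Reachable q a := ⟨p'⟩
      by_cases hqa : G.Adj q a
      · by_cases hqc : G.Adj q c
        · exact hpaw q a c b hqa hqc hac hbq.symm (fun h => hba h.symm) (fun h => hbc h.symm)
        · exact case_F hpaw (htri q hqreach) hbq hqa hac hqc hba hbc
      · by_cases hqc : G.Adj q c
        · exact case_F hpaw (htri q hqreach) hbq hqc hac.symm hqa hbc hba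
        · exact ih q p' (by simpa using Nat.lt_succ_iff.mp (lt_of_lt_of_le (by simp) hp)) hqa hqc

end Aux

/-- A graph `G` is paw-free iff every connected component of `G` is triangle-free or
complete multipartite. -/
theorem stmt8 {V : Type*} (G : SimpleGraph V) :
    IsEmpty (pawGraph ↪g G) ↔
      ∀ v : V,
        (¬ ∃ a b c : {w : V | G.Reachable v w},
            G.Adj a.1 b.1 ∧ G.Adj a.1 c.1 ∧ G.Adj b.1 c.1) ∨
        (∃ rel : {w : V | G.Reachable v w} → {w : V | G.Reachable v w} → Prop,
          Equivalence rel ∧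
            ∀ a b, (G.induce {w : V | G.Reachable v w}).Adj a b ↔ ¬ rel a b) := by
  constructor
  · intro hE v
    have hpaw := pawFree_of_isEmpty hE
    by_cases htri : ∃ a b c : {w : V | G.Reachable v w},
        G.Adj a.1 b.1 ∧ G.Adj a.1 c.1 ∧ G.Adj b.1 c.1
    · right
      obtain ⟨a, b, c, hab, hac, hbc⟩ := htri
      have haT : InTri G a.1 := ⟨b.1, c.1, hab, hac, hbc⟩
      refine ⟨fun x y => ¬ G.Adj x.1 y.1, ⟨fun x => G.irrefl, fun h h' => h h'.symm, ?_⟩, ?_⟩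
      · intro x y z hxy hyz
        intro hxz
        have htri' : ∀ w, G.Reachable w x.1 → InTri G w := by
          intro w hw
          exact inTri_of_reachable hpaw haT ((a.2.symm.trans x.2).trans hw.symm)
        obtain ⟨p⟩ : G.Reachable y.1 x.1 := y.2.symm.trans x.2
        exact key_E hpaw hxz htri' p.length y.1 p le_rfl (fun h => hxy h.symm) hyz
      · intro x y
        simp [SimpleGraph.comap_adj]
    · left; exact htri
  · intro h
    constructor
    intro f
    have adj01 : G.Adj (f 0) (f 1) := f.map_adj_iff.mpr (by simp [pawGraph])
    have adj02 : G.Adj (f 0) (f 2) := f.map_adj_iff.mpr (by simp [pawGraph])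
    have adj12 : G.Adj (f 1) (f 2) := f.map_adj_iff.mpr (by simp [pawGraph])
    have adj03 : G.Adj (f 0) (f 3) := f.map_adj_iff.mpr (by simp [pawGraph])
    have nadj13 : ¬ G.Adj (f 1) (f 3) := fun h => by
      have := f.map_adj_iff.mp h
      simp [pawGraph] at this
    have nadj23 : ¬ G.Adj (f 2) (f 3) := fun h => by
      have := f.map_adj_iff.mp h
      simp [pawGraph] at this
    set v := f 0 with hv
    have r0 : G.Reachable v (f 0) := SimpleGraph.Reachable.refl _
    have r1 : G.Reachable v (f 1) := adj01.reachable
    have r2 : G.Reachable v (f 2) := adj02.reachable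
    have r3 : G.Reachable v (f 3) := adj03.reachable
    rcases h v with hl | ⟨rel, hrel, hiff⟩
    · exact hl ⟨⟨f 0, r0⟩, ⟨f 1, r1⟩, ⟨f 2, r2⟩, adj01, adj02, adj12⟩
    · have key : ∀ (x y : {w : V | G.Reachable v w}), G.Adj x.1 y.1 ↔ ¬ rel x y := by
        intro x y
        rw [← hiff]
        simp [SimpleGraph.comap_adj]
      have h13 : rel ⟨f 1, r1⟩ ⟨f 3, r3⟩ := by
        by_contra hr; exact nadj13 ((key _ _).mpr hr)
      have h23 : rel ⟨f 2, r2⟩ ⟨f 3, r3⟩ := by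
        by_contra hr; exact nadj23 ((key _ _).mpr hr)
      have h12 : rel ⟨f 1, r1⟩ ⟨f 2, r2⟩ := hrel.trans h13 (hrel.symm h23)
      exact ((key _ _).mp adj12) h12
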